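/- Let k be a positive integer and F a finite nonnegative Borel measure on [0,∞) with ∫_0^∞ r² dF(r) < ∞. Define f(t) = ∫_0^∞ Ω_k(tr) dF(r). Then f is twice differentiable at 0 with f''(0) = -(1/k) ∫_0^∞ r² dF(r), and for t > 0, f'(t) = -(t/k) ∫_0^∞ r² Ω_{k+2}(tr) dF(r). -/

import Mathlib

open MeasureTheory Filter

open Topology

noncomputable section

/-- Bessel function of the first kind of order `nu`. -/
def besselJ (nu : ℝ) (t : ℝ) : ℝ :=
  (t / 2) ^ nu *
    ∑' m : ℕ, ((-1 : ℝ) ^ m / (m.factorial * Real.Gamma (m + nu + 1))) * (t / 2) ^ (2 * m)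

/-- `Omega k t = Γ(k/2) (2/t)^{(k-2)/2} J_{(k-2)/2}(t)` for `t ≠ 0`, and `Omega k 0 = 1`. -/
def Omega (k : ℕ) (t : ℝ) : ℝ :=
  if t = 0 then 1
  else Real.Gamma ((k : ℝ) / 2) * (2 / t) ^ ((k : ℝ) / 2 - 1) * besselJ ((k : ℝ) / 2 - 1) t

namespace SchoenbergAux

/-- coefficients of the entire function `x ↦ Ω_{2ν}(√x)` -/
def bc (ν : ℝ) (m : ℕ) : ℝ :=
  (-1)^m * Real.Gamma ν / (m.factorial * Real.Gamma (m + ν) * 4^m)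

lemma gamma_shift_pos {ν : ℝ} (hν : 0 < ν) (m : ℕ) : 0 < Real.Gamma ((m:ℝ) + ν) :=
  Real.Gamma_pos_of_pos (by positivity)

lemma bc_ne_zero {ν : ℝ} (hν : 0 < ν) (m : ℕ) : bc ν m ≠ 0 := by
  have h1 := Real.Gamma_pos_of_pos hν
  have h2 := gamma_shift_pos hν m
  have h3 : (m.factorial : ℝ) ≠ 0 := Nat.cast_ne_zero.mpr m.factorial_ne_zero
  have h4 : (4:ℝ)^m ≠ 0 := by positivity
  unfold bc
  apply div_ne_zero
  · exact mul_ne_zero (by positivity) h1.ne'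
  · exact mul_ne_zero (mul_ne_zero h3 h2.ne') h4

lemma bc_zero {ν : ℝ} (hν : 0 < ν) : bc ν 0 = 1 := by
  have h1 := Real.Gamma_pos_of_pos hν
  simp [bc, div_self h1.ne']

lemma bc_succ {ν : ℝ} (hν : 0 < ν) (n : ℕ) :
    bc ν (n+1) = -(1/(4*((n:ℝ)+1)*((n:ℝ)+ν))) * bc ν n := by
  have h0 : (0:ℝ) < (n:ℝ) + ν := by positivity
  have h1 : ((n+1:ℕ):ℝ) + ν = ((n:ℝ) + ν) + 1 := by push_cast; ring
  have h2 := gamma_shift_pos hν n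
  have h3 : (n.factorial : ℝ) ≠ 0 := Nat.cast_ne_zero.mpr n.factorial_ne_zero
  unfold bc
  rw [h1, Real.Gamma_add_one h0.ne']
  push_cast [Nat.factorial_succ, pow_succ]
  field_simp

def P (ν : ℝ) : FormalMultilinearSeries ℝ ℝ ℝ := FormalMultilinearSeries.ofScalars ℝ (bc ν)

def phi (ν : ℝ) (x : ℝ) : ℝ := FormalMultilinearSeries.ofScalarsSum (bc ν) x

lemma P_radius {ν : ℝ} (hν : 0 < ν) : (P ν).radius = ⊤ := by
  apply FormalMultilinearSeries.ofScalars_radius_eq_top_of_tendsto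
  · exact Eventually.of_forall fun n => bc_ne_zero hν n
  · have hb : ∀ n : ℕ, ‖bc ν (n+1)‖ / ‖bc ν n‖ = 1/(4*((n:ℝ)+1)*((n:ℝ)+ν)) := by
      intro n
      rw [bc_succ hν n, norm_mul, mul_div_assoc,
        div_self (by simpa using norm_ne_zero_iff.mpr (bc_ne_zero hν n)), mul_one,
        norm_neg, Real.norm_eq_abs, abs_of_pos (by positivity)]
    simp only [hb]
    have key : Tendsto (fun n : ℕ => (1/(4*ν)) * (1/((n:ℝ)+1))) atTop (𝓝 0) := by
      have := tendsto_one_div_add_atTop_nhds_zero_nat (𝕜 := ℝ)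
      simpa using this.const_mul (1/(4*ν))
    apply squeeze_zero (fun n => by positivity) _ key
    intro n
    rw [div_le_iff₀ (by positivity)]
    have h1 : (1:ℝ)/((n:ℝ)+1) * (4*((n:ℝ)+1)*((n:ℝ)+ν)) = 4*((n:ℝ)+ν) := by
      field_simp
    calc (1:ℝ) ≤ (1/ν) * ((n:ℝ)+ν) := by
          rw [one_div, inv_mul_eq_div, le_div_iff₀ hν]
          nlinarith [Nat.cast_nonneg (α := ℝ) n]
      _ ≤ 1/(4*ν) * (1/((n:ℝ)+1)) * (4*((n:ℝ)+1)*((n:ℝ)+ν)) := by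
          rw [mul_assoc, h1]
          ring_nf
          rfl

lemma hasFPS {ν : ℝ} (hν : 0 < ν) : HasFPowerSeriesOnBall (phi ν) (P ν) 0 ⊤ := by
  have := (P ν).hasFPowerSeriesOnBall (by rw [P_radius hν]; exact ENNReal.zero_lt_top)
  rw [P_radius hν] at this
  exact this

lemma hasSum_phi {ν : ℝ} (hν : 0 < ν) (x : ℝ) :
    HasSum (fun m => bc ν m * x^m) (phi ν x) := by
  have h := (hasFPS hν).hasSum (y := x) (by simp)
  simp only [zero_add] at h
  have he : (fun n => (P ν) n fun _ => x) = fun m => bc ν m * x^m := by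
    funext m
    simp only [P, FormalMultilinearSeries.ofScalars_apply_eq, smul_eq_mul]
  rwa [he] at h

lemma phi_zero {ν : ℝ} (hν : 0 < ν) : phi ν 0 = 1 := by
  have h := (hasSum_phi hν 0).tsum_eq
  rw [phi, FormalMultilinearSeries.ofScalarsSum_zero, bc_zero hν, smul_eq_mul, one_mul]

/-- shifted-coefficient identity between `bc ν` and `bc (ν+1)` -/
lemma bc_shift {ν : ℝ} (hν : 0 < ν) (n : ℕ) :
    bc (ν+1) n = -(4*ν) * (((n:ℝ)+1) * bc ν (n+1)) := by
  have h0 : (0:ℝ) < (n:ℝ) + ν := by positivity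
  rw [bc_succ hν n]
  unfold bc
  have h1 : (n:ℝ) + (ν + 1) = ((n:ℝ) + ν) + 1 := by ring
  rw [h1, Real.Gamma_add_one h0.ne', Real.Gamma_add_one hν.ne']
  have h2 := (gamma_shift_pos hν n).ne'
  have h3 : (n.factorial : ℝ) ≠ 0 := Nat.cast_ne_zero.mpr n.factorial_ne_zero
  have h4 : (4:ℝ)^n ≠ 0 := by positivity
  field_simp

lemma analyticAt_phi {ν : ℝ} (hν : 0 < ν) (x : ℝ) : AnalyticAt ℝ (phi ν) x :=
  (hasFPS hν).analyticAt_of_mem (by simp)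

lemma differentiable_phi {ν : ℝ} (hν : 0 < ν) : Differentiable ℝ (phi ν) :=
  fun x => (analyticAt_phi hν x).differentiableAt

lemma continuous_phi {ν : ℝ} (hν : 0 < ν) : Continuous (phi ν) :=
  (differentiable_phi hν).continuous

lemma deriv_phi {ν : ℝ} (hν : 0 < ν) (x : ℝ) :
    deriv (phi ν) x = -(1/(4*ν)) * phi (ν+1) x := by
  rcases eq_or_ne x 0 with rfl | hx
  · have h := (hasFPS hν).hasFPowerSeriesAt.deriv
    rw [h, phi_zero (by positivity)]
    have hc : ((P ν 1) fun _ => (1:ℝ)) = bc ν 1 := by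
      simp only [P, FormalMultilinearSeries.ofScalars_apply_eq, smul_eq_mul, one_pow, mul_one]
    have h1 := bc_succ hν 0
    rw [bc_zero hν] at h1
    show ((P ν 1) fun _ => (1:ℝ)) = -(1 / (4 * ν)) * 1
    rw [hc, h1]
    push_cast
    ring
  · -- x ≠ 0
    have hd := (hasFPS hν).fderiv
    have hsum := hd.hasSum (y := x) (by simp)
    rw [zero_add] at hsum
    -- apply the continuous linear evaluation at x
    have hsum2 := hsum.mapL (ContinuousLinearMap.apply ℝ ℝ x)
    simp only [ContinuousLinearMap.apply_apply] at hsum2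
    have he : (fun n => ((P ν).derivSeries n fun _ => x) x)
        = fun n => x * (-(1/(4*ν)) * (bc (ν+1) n * x^n)) := by
      funext n
      rw [FormalMultilinearSeries.derivSeries_apply_diag]
      have : (P ν) (n+1) (fun _ => x) = bc ν (n+1) * x^(n+1) := by
        simp only [P, FormalMultilinearSeries.ofScalars_apply_eq, smul_eq_mul]
      rw [this, bc_shift hν n]
      simp only [nsmul_eq_mul]
      push_cast
      field_simp
      ring
    rw [he] at hsum2
    have hsum3 := ((hasSum_phi (by positivity : (0:ℝ) < ν+1) x).mul_left (-(1/(4*ν)))).mul_left x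
    have hkey : fderiv ℝ (phi ν) x x = x * (-(1/(4*ν)) * phi (ν+1) x) :=
      hsum2.unique hsum3
    have hfx : fderiv ℝ (phi ν) x x = x * deriv (phi ν) x := by
      have h2 := (fderiv ℝ (phi ν) x).map_smul x (1:ℝ)
      simp only [smul_eq_mul, mul_one] at h2
      rw [h2, fderiv_apply_one_eq_deriv]
    rw [hfx] at hkey
    exact mul_left_cancel₀ hx hkey

lemma hasDerivAt_phi {ν : ℝ} (hν : 0 < ν) (x : ℝ) :
    HasDerivAt (phi ν) (-(1/(4*ν)) * phi (ν+1) x) x := by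
  have h := (differentiable_phi hν x).hasDerivAt
  rwa [deriv_phi hν x] at h

/-- second coefficient identity -/
lemma bc_shift2 {ν : ℝ} (hν : 0 < ν) (n : ℕ) :
    bc (ν+1) (n+1) - bc ν (n+1) = 1/(4*ν*(ν+1)) * bc (ν+2) n := by
  have hb3 := bc_shift (by positivity : (0:ℝ) < ν+1) n
  rw [show ν + 1 + 1 = ν + 2 by ring] at hb3
  have hb1 := bc_shift hν (n+1)
  have hb2 := bc_succ hν (n+1)
  rw [hb3, hb1, hb2]
  have hd1 : ((n:ℝ)+1+ν) ≠ 0 := by positivity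
  have hd2 : ((n:ℝ)+1+1) ≠ 0 := by positivity
  push_cast
  field_simp
  ring

set_option maxHeartbeats 1000000 in
/-- the key three-term identity (equivalent to the Bessel ODE) -/
lemma phi_ode {ν : ℝ} (hν : 0 < ν) (x : ℝ) :
    phi ν x = phi (ν+1) x - x/(4*ν*(ν+1)) * phi (ν+2) x := by
  have hν1 : (0:ℝ) < ν+1 := by linarith
  have hν2 : (0:ℝ) < ν+2 := by linarith
  have h1 := (hasSum_phi hν1 x).sub (hasSum_phi hν x)
  have h2 := ((hasSum_phi hν2 x).mul_left (1/(4*ν*(ν+1)))).mul_right x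
  have he : (fun n => (1/(4*ν*(ν+1)) * (bc (ν+2) n * x^n)) * x)
      = fun n => (fun m => bc (ν+1) m * x^m - bc ν m * x^m) (n+1) := by
    funext n
    simp only
    rw [← sub_mul, bc_shift2 hν n, pow_succ]
    ring
  rw [he] at h2
  have h2' := (hasSum_nat_add_iff (f := fun m => bc (ν+1) m * x^m - bc ν m * x^m) 1).mp h2
  rw [Finset.sum_range_one] at h2'
  simp only [bc_zero hν, bc_zero hν1, pow_zero, mul_one,
    sub_self, add_zero] at h2'
  have := h1.unique h2'
  linear_combination -this

/-- `W ν u = Ω_{2ν}(u)`, as a function on all of `ℝ`. -/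
def W (ν : ℝ) (u : ℝ) : ℝ := phi ν (u^2)
/-- derivative of `W ν` -/
def V (ν : ℝ) (u : ℝ) : ℝ := -(1/(2*ν)) * u * phi (ν+1) (u^2)

lemma hasDerivAt_sq (u : ℝ) : HasDerivAt (fun u : ℝ => u^2) (2*u) u := by
  simpa using hasDerivAt_pow 2 u

lemma hasDerivAt_W {ν : ℝ} (hν : 0 < ν) (u : ℝ) : HasDerivAt (W ν) (V ν u) u := by
  have h := (hasDerivAt_phi hν (u^2)).comp u (hasDerivAt_sq u)
  have : -(1/(4*ν)) * phi (ν+1) (u^2) * (2*u) = V ν u := by unfold V; ring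
  rw [this] at h
  exact h

lemma hasDerivAt_V {ν : ℝ} (hν : 0 < ν) (u : ℝ) :
    HasDerivAt (V ν)
      (-(1/(2*ν)) * phi (ν+1) (u^2) + u^2/(4*ν*(ν+1)) * phi (ν+2) (u^2)) u := by
  have hν1 : (0:ℝ) < ν + 1 := by linarith
  have ha : HasDerivAt (fun u : ℝ => -(1/(2*ν)) * u) (-(1/(2*ν))) u := by
    simpa using (hasDerivAt_id u).const_mul (-(1/(2*ν)))
  have hb := (hasDerivAt_phi hν1 (u^2)).comp u (hasDerivAt_sq u)
  have h := ha.mul hb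
  simp only [Function.comp_apply] at h
  have : -(1/(2*ν)) * phi (ν+1) (u^2) +
      -(1/(2*ν)) * u * (-(1/(4*(ν+1))) * phi (ν+1+1) (u^2) * (2*u))
      = -(1/(2*ν)) * phi (ν+1) (u^2) + u^2/(4*ν*(ν+1)) * phi (ν+2) (u^2) := by
    rw [show ν+1+1 = ν+2 by ring]; field_simp
  rw [this] at h
  exact h

/-- energy function -/
def Ener (ν : ℝ) (u : ℝ) : ℝ := (W ν u)^2 + (V ν u)^2

lemma hasDerivAt_Ener {ν : ℝ} (hν : 0 < ν) (u : ℝ) :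
    HasDerivAt (Ener ν)
      (2 * W ν u * V ν u + 2 * V ν u *
        (-(1/(2*ν)) * phi (ν+1) (u^2) + u^2/(4*ν*(ν+1)) * phi (ν+2) (u^2))) u := by
  have h1 : HasDerivAt (fun u => (W ν u)^2) (2 * W ν u * V ν u) u := by
    have := ((hasDerivAt_W hν u).mul (hasDerivAt_W hν u))
    have e : V ν u * W ν u + W ν u * V ν u = 2 * W ν u * V ν u := by ring
    rw [e] at this
    simp only [pow_two]; exact this
  have h2 : HasDerivAt (fun u => (V ν u)^2)
      (2 * V ν u * (-(1/(2*ν)) * phi (ν+1) (u^2) + u^2/(4*ν*(ν+1)) * phi (ν+2) (u^2))) u := by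
    have := ((hasDerivAt_V hν u).mul (hasDerivAt_V hν u))
    have e : (-(1/(2*ν)) * phi (ν+1) (u^2) + u^2/(4*ν*(ν+1)) * phi (ν+2) (u^2)) * V ν u
        + V ν u * (-(1/(2*ν)) * phi (ν+1) (u^2) + u^2/(4*ν*(ν+1)) * phi (ν+2) (u^2))
        = 2 * V ν u * (-(1/(2*ν)) * phi (ν+1) (u^2) + u^2/(4*ν*(ν+1)) * phi (ν+2) (u^2)) := by
      ring
    rw [e] at this
    have hf : (fun u => (V ν u)^2) = V ν * V ν := by funext u; simp [pow_two]
    rw [hf]; exact this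
  exact h1.add h2

lemma Ener_antitone {ν : ℝ} (hν : 1/2 ≤ ν) : AntitoneOn (Ener ν) (Set.Ici 0) := by
  have hν0 : 0 < ν := by linarith
  have hdiff : Differentiable ℝ (Ener ν) := fun u => (hasDerivAt_Ener hν0 u).differentiableAt
  apply antitoneOn_of_deriv_nonpos (convex_Ici 0) hdiff.continuous.continuousOn
    (fun u _ => hdiff u |>.differentiableWithinAt)
  intro u hu
  rw [interior_Ici] at hu
  rw [(hasDerivAt_Ener hν0 u).deriv]
  have key : W ν u + (-(1/(2*ν)) * phi (ν+1) (u^2) + u^2/(4*ν*(ν+1)) * phi (ν+2) (u^2))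
      = (1 - 1/(2*ν)) * phi (ν+1) (u^2) := by
    rw [W, phi_ode hν0 (u^2)]
    ring
  have expand : 2 * W ν u * V ν u + 2 * V ν u *
        (-(1/(2*ν)) * phi (ν+1) (u^2) + u^2/(4*ν*(ν+1)) * phi (ν+2) (u^2))
      = 2 * V ν u * ((1 - 1/(2*ν)) * phi (ν+1) (u^2)) := by
    rw [← key]; ring
  rw [expand, V]
  have h1 : 0 ≤ 1 - 1/(2*ν) := by
    rw [sub_nonneg, div_le_one (by linarith)]
    linarith
  have hu' : 0 ≤ u := le_of_lt hu
  have : 2 * (-(1/(2*ν)) * u * phi (ν+1) (u^2)) * ((1 - 1/(2*ν)) * phi (ν+1) (u^2))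
      = -(2 * (1/(2*ν)) * u * (1 - 1/(2*ν)) * (phi (ν+1) (u^2))^2) := by ring
  rw [this]
  have : 0 ≤ 2 * (1/(2*ν)) * u * (1 - 1/(2*ν)) * (phi (ν+1) (u^2))^2 := by positivity
  linarith

lemma abs_W_le_one {ν : ℝ} (hν : 1/2 ≤ ν) {u : ℝ} (hu : 0 ≤ u) : |W ν u| ≤ 1 := by
  have hν0 : 0 < ν := by linarith
  have h := Ener_antitone hν (Set.self_mem_Ici) hu hu
  have hE0 : Ener ν 0 = 1 := by
    rw [Ener, W, V, show (0:ℝ)^2 = 0 by norm_num, phi_zero hν0]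
    ring
  rw [hE0] at h
  have h2 : (W ν u)^2 ≤ 1 := by
    have := sq_nonneg (V ν u)
    have hE : Ener ν u = (W ν u)^2 + (V ν u)^2 := rfl
    nlinarith [h]
  exact (sq_le_one_iff_abs_le_one _).mp h2

lemma abs_phi_le_one {ν : ℝ} (hν : 1/2 ≤ ν) {x : ℝ} (hx : 0 ≤ x) : |phi ν x| ≤ 1 := by
  have := abs_W_le_one hν (Real.sqrt_nonneg x)
  rwa [W, Real.sq_sqrt hx] at this

lemma abs_phi_sub_one {ν : ℝ} (hν : 1/2 ≤ ν) {x : ℝ} (hx : 0 ≤ x) :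
    |phi ν x - 1| ≤ x / (2*ν) := by
  have hν0 : 0 < ν := by linarith
  set u := Real.sqrt x with hu
  have hu0 : 0 ≤ u := Real.sqrt_nonneg x
  have husq : u^2 = x := Real.sq_sqrt hx
  have bound : ∀ y ∈ Set.Icc (0:ℝ) u, ‖V ν y‖ ≤ u/(2*ν) := by
    intro y hy
    have hy0 : 0 ≤ y := hy.1
    have hyu : y ≤ u := hy.2
    have hφ : |phi (ν+1) (y^2)| ≤ 1 := abs_phi_le_one (by linarith) (sq_nonneg y)
    rw [V, Real.norm_eq_abs, abs_mul, abs_mul, abs_neg, abs_of_pos (by positivity : (0:ℝ) < 1/(2*ν)), abs_of_nonneg hy0]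
    calc 1/(2*ν) * y * |phi (ν+1) (y^2)| ≤ 1/(2*ν) * y * 1 := by
          apply mul_le_mul_of_nonneg_left hφ (by positivity)
      _ = y/(2*ν) := by ring
      _ ≤ u/(2*ν) := by gcongr
  have hder : ∀ y ∈ Set.Icc (0:ℝ) u, HasDerivWithinAt (W ν) (V ν y) (Set.Icc 0 u) y :=
    fun y _ => (hasDerivAt_W hν0 y).hasDerivWithinAt
  have := (convex_Icc (0:ℝ) u).norm_image_sub_le_of_norm_hasDerivWithin_le hder bound
    (Set.left_mem_Icc.mpr hu0) (Set.right_mem_Icc.mpr hu0)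
  rw [W, W, husq, show (0:ℝ)^2 = 0 by norm_num, phi_zero hν0, Real.norm_eq_abs,
    Real.norm_eq_abs, sub_zero, abs_of_nonneg hu0] at this
  calc |phi ν x - 1| ≤ u/(2*ν) * u := this
    _ = x/(2*ν) := by rw [← husq]; ring

lemma Omega_eq {k : ℕ} (hk : 1 ≤ k) {u : ℝ} (hu : 0 ≤ u) :
    Omega k u = phi ((k:ℝ)/2) (u^2) := by
  have hk1 : (1:ℝ) ≤ (k:ℝ) := by exact_mod_cast hk
  have hν : 0 < (k:ℝ)/2 := by linarith
  rcases eq_or_lt_of_le hu with h0 | h0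
  · rw [Omega, if_pos h0.symm, ← h0]
    rw [show (0:ℝ)^2 = 0 by norm_num, phi_zero hν]
  · rw [Omega, if_neg h0.ne', besselJ]
    have h1 : (2/u) ^ ((k:ℝ)/2 - 1) * (u/2) ^ ((k:ℝ)/2 - 1) = 1 := by
      rw [← Real.mul_rpow (by positivity) (by positivity),
        show (2/u)*(u/2) = 1 by field_simp, Real.one_rpow]
    rw [show Real.Gamma ((k:ℝ)/2) * (2/u) ^ ((k:ℝ)/2 - 1) *
        ((u/2) ^ ((k:ℝ)/2 - 1) * ∑' m : ℕ, ((-1:ℝ)^m /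
          (m.factorial * Real.Gamma (m + ((k:ℝ)/2 - 1) + 1))) * (u/2)^(2*m))
        = ((2/u) ^ ((k:ℝ)/2 - 1) * (u/2) ^ ((k:ℝ)/2 - 1)) *
          (Real.Gamma ((k:ℝ)/2) * ∑' m : ℕ, ((-1:ℝ)^m /
            (m.factorial * Real.Gamma (m + ((k:ℝ)/2 - 1) + 1))) * (u/2)^(2*m)) by ring,
      h1, one_mul]
    rw [← (hasSum_phi hν (u^2)).tsum_eq, ← tsum_mul_left]
    apply tsum_congr
    intro m
    have e1 : (m:ℝ) + ((k:ℝ)/2 - 1) + 1 = (m:ℝ) + (k:ℝ)/2 := by ring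
    have e2 : (u/2)^(2*m) = u^(2*m) / 4^m := by
      rw [div_pow, pow_mul, pow_mul]
      norm_num
    have e3 : (u^2)^m = u^(2*m) := by rw [pow_mul]
    rw [e1, e2, e3, bc]
    ring

end SchoenbergAux

open SchoenbergAux

theorem schoenberg_derivatives (k : ℕ) (hk : 1 ≤ k) (F : Measure ℝ) [IsFiniteMeasure F]
    (hsupp : F (Set.Iio 0) = 0) (hr2 : Integrable (fun r => r ^ 2) F) :
    (∀ t, 0 < t → HasDerivAt (fun s => ∫ r, Omega k (s * r) ∂F)
        (-(t / (k : ℝ)) * ∫ r, r ^ 2 * Omega (k + 2) (t * r) ∂F) t) ∧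
    HasDerivWithinAt
        (fun t => derivWithin (fun s => ∫ r, Omega k (s * r) ∂F) (Set.Ici 0) t)
        (-(1 / (k : ℝ)) * ∫ r, r ^ 2 ∂F) (Set.Ici 0) 0 := by
  have hk1 : (1:ℝ) ≤ (k:ℝ) := by exact_mod_cast hk
  have hkpos : (0:ℝ) < (k:ℝ) := by linarith
  set ν : ℝ := (k:ℝ)/2 with hνdef
  have hν : 1/2 ≤ ν := by rw [hνdef]; linarith
  have hν0 : 0 < ν := by linarith
  have hν1 : 1/2 ≤ ν + 1 := by linarith
  have hν10 : 0 < ν + 1 := by linarith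
  have hae : ∀ᵐ r ∂F, 0 ≤ r := by
    rw [ae_iff]
    have : {r : ℝ | ¬ 0 ≤ r} = Set.Iio 0 := by ext r; simp [not_le]
    rw [this]; exact hsupp
  have hOm : ∀ u : ℝ, 0 ≤ u → Omega k u = phi ν (u^2) := fun u hu => Omega_eq hk hu
  have hcast : ((k+2:ℕ):ℝ)/2 = ν + 1 := by rw [hνdef]; push_cast; ring
  have hOm2 : ∀ u : ℝ, 0 ≤ u → Omega (k+2) u = phi (ν+1) (u^2) := by
    intro u hu
    rw [Omega_eq (by omega : 1 ≤ k+2) hu, hcast]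
  -- measurability of the integrands
  have hmeas : ∀ s : ℝ, 0 < s → AEStronglyMeasurable (fun r => Omega k (s * r)) F := by
    intro s hs
    have hc : Continuous fun r : ℝ => phi ν ((s*r)^2) :=
      (continuous_phi hν0).comp ((continuous_mul_left s).pow 2)
    apply hc.aestronglyMeasurable.congr
    filter_upwards [hae] with r hr
    exact (hOm (s*r) (mul_nonneg hs.le hr)).symm
  have hint : ∀ s : ℝ, 0 < s → Integrable (fun r => Omega k (s*r)) F := by
    intro s hs
    apply Integrable.mono' (integrable_const (1:ℝ)) (hmeas s hs)
    filter_upwards [hae] with r hr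
    rw [Real.norm_eq_abs, hOm _ (mul_nonneg hs.le hr)]
    exact abs_phi_le_one hν (sq_nonneg _)
  have hmeas2 : ∀ s : ℝ, 0 < s →
      AEStronglyMeasurable (fun r => r^2 * Omega (k+2) (s * r)) F := by
    intro s hs
    have hc : Continuous fun r : ℝ => r^2 * phi (ν+1) ((s*r)^2) :=
      (continuous_pow 2).mul ((continuous_phi hν10).comp ((continuous_mul_left s).pow 2))
    apply hc.aestronglyMeasurable.congr
    filter_upwards [hae] with r hr
    rw [hOm2 (s*r) (mul_nonneg hs.le hr)]
  -- Part 1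
  have part1 : ∀ t, 0 < t → HasDerivAt (fun s => ∫ r, Omega k (s * r) ∂F)
      (-(t / (k : ℝ)) * ∫ r, r ^ 2 * Omega (k + 2) (t * r) ∂F) t := by
    intro t ht
    have hbound : ∀ᵐ r ∂F, ∀ s ∈ Metric.ball t (t/2),
        ‖-(s / (k:ℝ)) * (r ^ 2 * Omega (k + 2) (s * r))‖ ≤ 2*t*r^2 := by
      filter_upwards [hae] with r hr s hs
      rw [Metric.mem_ball, Real.dist_eq] at hs
      obtain ⟨hs1, hs2⟩ := abs_lt.mp hs
      have hs0 : 0 < s := by linarith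
      have hs2' : s ≤ 2*t := by linarith
      have hOmb : |Omega (k+2) (s*r)| ≤ 1 := by
        rw [hOm2 (s*r) (mul_nonneg hs0.le hr)]
        exact abs_phi_le_one hν1 (sq_nonneg _)
      rw [Real.norm_eq_abs, abs_mul, abs_mul, abs_neg, abs_div, abs_of_pos hs0,
        abs_of_pos hkpos, abs_of_nonneg (sq_nonneg r)]
      have h1 : s/(k:ℝ) ≤ 2*t := by
        calc s/(k:ℝ) ≤ s/1 := by gcongr
          _ = s := div_one s
          _ ≤ 2*t := hs2'
      have h2 : r^2 * |Omega (k+2) (s*r)| ≤ r^2 := by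
        nlinarith [sq_nonneg r, abs_nonneg (Omega (k+2) (s*r))]
      calc s/(k:ℝ) * (r^2 * |Omega (k+2) (s*r)|) ≤ (2*t) * r^2 :=
            mul_le_mul h1 h2 (by positivity) (by linarith)
        _ = 2*t*r^2 := by ring
    have hdiff : ∀ᵐ r ∂F, ∀ s ∈ Metric.ball t (t/2),
        HasDerivAt (fun s' => Omega k (s' * r))
          (-(s / (k:ℝ)) * (r ^ 2 * Omega (k + 2) (s * r))) s := by
      filter_upwards [hae] with r hr s hs
      rw [Metric.mem_ball, Real.dist_eq] at hs
      obtain ⟨hs1, hs2⟩ := abs_lt.mp hs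
      have hs0 : 0 < s := by linarith
      have hmul : HasDerivAt (fun s' : ℝ => s' * r) r s := hasDerivAt_mul_const r
      have hWc := (hasDerivAt_W hν0 (s*r)).comp s hmul
      have heq : (fun s' => Omega k (s' * r)) =ᶠ[𝓝 s] (W ν ∘ fun s' => s' * r) := by
        filter_upwards [eventually_gt_nhds hs0] with s' hs'
        rw [Function.comp, W]
        exact hOm _ (mul_nonneg hs'.le hr)
      have hfinal := hWc.congr_of_eventuallyEq heq
      convert hfinal using 1
      · rfl
      · rfl
      have hkne : (k:ℝ) ≠ 0 := hkpos.ne'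
      rw [hOm2 (s*r) (mul_nonneg hs0.le hr), V, hνdef]
      field_simp
    have key := hasDerivAt_integral_of_dominated_loc_of_deriv_le (Metric.ball_mem_nhds t (half_pos ht))
      ((eventually_gt_nhds ht).mono fun s hs => hmeas s hs)
      (hint t ht)
      ((hmeas2 t ht).const_mul (-(t/(k:ℝ))))
      hbound
      ((hr2.const_mul (2*t)) : Integrable (fun r => 2*t*r^2) F)
      hdiff
    have hd := key.2
    rwa [integral_const_mul] at hd
  refine ⟨part1, ?_⟩
  -- Part 2
  set f : ℝ → ℝ := fun s => ∫ r, Omega k (s * r) ∂F with hf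
  have hset : Set.Ici (0:ℝ) \ {0} = Set.Ioi 0 := by
    ext y
    simp only [Set.mem_diff, Set.mem_Ici, Set.mem_singleton_iff, Set.mem_Ioi]
    constructor
    · rintro ⟨h1, h2⟩; exact lt_of_le_of_ne h1 (Ne.symm h2)
    · intro h; exact ⟨h.le, h.ne'⟩
  have hf0 : f 0 = ∫ r, (1:ℝ) ∂F := by
    rw [hf]
    simp only
    congr 1
    funext r
    rw [zero_mul, Omega, if_pos rfl]
  -- the one-sided derivative of f at 0 is 0
  have hA : HasDerivWithinAt f 0 (Set.Ici 0) 0 := by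
    rw [hasDerivWithinAt_iff_tendsto_slope, hset]
    have T1 : Tendsto (fun s => ∫ r, (Omega k (s*r) - 1)/s ∂F) (𝓝[Set.Ioi 0] 0)
        (𝓝 (∫ r, (0:ℝ) ∂F)) := by
      apply tendsto_integral_filter_of_dominated_convergence (bound := fun r => r^2)
      · filter_upwards [self_mem_nhdsWithin] with s hs
        have hc : Continuous fun r : ℝ => (phi ν ((s*r)^2) - 1)/s :=
          (((continuous_phi hν0).comp ((continuous_mul_left s).pow 2)).sub
            continuous_const).div_const s
        apply hc.aestronglyMeasurable.congr
        filter_upwards [hae] with r hr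
        rw [hOm (s*r) (mul_nonneg (le_of_lt hs) hr)]
      · have h01 : Set.Ioc (0:ℝ) 1 ∈ 𝓝[Set.Ioi 0] (0:ℝ) :=
          Ioc_mem_nhdsGT_of_mem ⟨le_refl 0, zero_lt_one⟩
        filter_upwards [h01] with s hs
        filter_upwards [hae] with r hr
        have hs0 : 0 < s := hs.1
        rw [Real.norm_eq_abs, abs_div, abs_of_pos hs0, div_le_iff₀ hs0]
        have hb := abs_phi_sub_one hν (sq_nonneg (s*r))
        rw [← hOm _ (mul_nonneg hs0.le hr)] at hb
        calc |Omega k (s*r) - 1| ≤ (s*r)^2/(2*ν) := hb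
          _ = s^2 * r^2 / (k:ℝ) := by rw [hνdef]; ring
          _ ≤ r^2 * s := by
              rw [div_le_iff₀ hkpos]
              nlinarith [sq_nonneg r, hs.2, hs0.le, sq_nonneg (s*r)]
      · exact hr2
      · filter_upwards [hae] with r hr
        apply squeeze_zero_norm'
        · filter_upwards [self_mem_nhdsWithin] with s hs
          have hs0 : (0:ℝ) < s := hs
          rw [Real.norm_eq_abs, abs_div, abs_of_pos hs0, div_le_iff₀ hs0]
          have hb := abs_phi_sub_one hν (sq_nonneg (s*r))
          rw [← hOm _ (mul_nonneg hs0.le hr)] at hb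
          calc |Omega k (s*r) - 1| ≤ (s*r)^2/(2*ν) := hb
            _ = s * (r^2/(2*ν)) * s := by ring
        · have : Tendsto (fun s : ℝ => s * (r^2/(2*ν))) (𝓝 0) (𝓝 (0 * (r^2/(2*ν)))) :=
            (continuous_id.mul continuous_const).tendsto 0
          rw [zero_mul] at this
          exact this.mono_left nhdsWithin_le_nhds
    have T1' : Tendsto (fun s => ∫ r, (Omega k (s*r) - 1)/s ∂F) (𝓝[Set.Ioi 0] 0) (𝓝 0) := by
      simpa using T1
    apply Tendsto.congr' _ T1'
    filter_upwards [self_mem_nhdsWithin] with s hs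
    have hs0 : (0:ℝ) < s := hs
    rw [slope_def_field, sub_zero, hf0]
    simp only [hf]
    rw [← integral_sub (hint s hs0) (integrable_const 1), ← integral_div]
  have hD0 : derivWithin f (Set.Ici 0) 0 = 0 :=
    hA.derivWithin (uniqueDiffOn_Ici 0 0 Set.self_mem_Ici)
  have hDt : ∀ t : ℝ, 0 < t → derivWithin f (Set.Ici 0) t
      = -(t / (k:ℝ)) * ∫ r, r ^ 2 * Omega (k + 2) (t * r) ∂F := by
    intro t ht
    exact ((part1 t ht).hasDerivWithinAt).derivWithin (uniqueDiffOn_Ici 0 t ht.le)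
  rw [hasDerivWithinAt_iff_tendsto_slope, hset]
  have T2 : Tendsto (fun s => ∫ r, r^2 * Omega (k+2) (s*r) ∂F) (𝓝[Set.Ioi 0] 0)
      (𝓝 (∫ r, r^2 ∂F)) := by
    apply tendsto_integral_filter_of_dominated_convergence (bound := fun r => r^2)
    · filter_upwards [self_mem_nhdsWithin] with s hs
      exact hmeas2 s hs
    · filter_upwards [self_mem_nhdsWithin] with s hs
      filter_upwards [hae] with r hr
      rw [Real.norm_eq_abs, abs_mul, abs_of_nonneg (sq_nonneg r)]
      have hOmb : |Omega (k+2) (s*r)| ≤ 1 := by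
        rw [hOm2 (s*r) (mul_nonneg (le_of_lt hs) hr)]
        exact abs_phi_le_one hν1 (sq_nonneg _)
      nlinarith [sq_nonneg r, abs_nonneg (Omega (k+2) (s*r))]
    · exact hr2
    · filter_upwards [hae] with r hr
      have hc : Tendsto (fun s : ℝ => r^2 * phi (ν+1) ((s*r)^2)) (𝓝 0)
          (𝓝 (r^2 * phi (ν+1) ((0*r)^2))) :=
        (continuous_const.mul ((continuous_phi hν10).comp
          ((continuous_mul_right r).pow 2))).tendsto 0
      rw [zero_mul, show ((0:ℝ)^2 = 0) by norm_num, phi_zero hν10, mul_one] at hc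
      apply Tendsto.congr' _ (hc.mono_left nhdsWithin_le_nhds)
      filter_upwards [self_mem_nhdsWithin] with s hs
      rw [hOm2 (s*r) (mul_nonneg (le_of_lt hs) hr)]
  apply Tendsto.congr' _ (T2.const_mul (-(1/(k:ℝ))))
  filter_upwards [self_mem_nhdsWithin] with s hs
  have hs0 : (0:ℝ) < s := hs
  have hkne : (k:ℝ) ≠ 0 := hkpos.ne'
  rw [slope_def_field, sub_zero, hD0, sub_zero, hDt s hs0]
  field_simp
  ring_nf
  simp only [mul_comm]
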